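/- arXiv:1412.7366 — 3 statements merged into one kernel-verified Lean document; each statement's English description precedes it below -/
import Mathlib

section
/- For every natural number k ≥ 1, with n = 3^(k+2) - 1, one has ((2k+8)·3^k - 1) / (3^(k+2) - 1) ≥ (2/9)·log₃(n+1), where the quotient and logarithm are taken over the reals. -/
theorem greedy_ratio_log_bound (k : ℕ) (hk : 1 ≤ k) (n : ℕ) (hn : n = 3 ^ (k + 2) - 1) :
    (((2 * k + 8) * 3 ^ k - 1 : ℝ)) / ((3 : ℝ) ^ (k + 2) - 1)
      ≥ (2 / 9) * Real.logb 3 (n + 1) := by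
  have h1 : (1:ℕ) ≤ 3 ^ (k + 2) := Nat.one_le_pow _ _ (by norm_num)
  have hn' : ((n : ℝ) + 1) = 3 ^ (k + 2) := by
    subst hn
    push_cast [Nat.cast_sub h1]
    ring
  have hlog : Real.logb 3 ((n : ℝ) + 1) = (k + 2 : ℝ) := by
    rw [hn']
    rw [show ((3:ℝ)^(k+2)) = (3:ℝ)^((k+2:ℕ):ℝ) by rw [Real.rpow_natCast]]
    rw [Real.logb_rpow (by norm_num)] <;> norm_num
  rw [hlog]
  set x : ℝ := (3:ℝ) ^ k with hx
  have hx3 : (3:ℝ) ≤ x := by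
    calc (3:ℝ) = 3 ^ 1 := by norm_num
    _ ≤ 3 ^ k := by exact pow_le_pow_right₀ (by norm_num) hk
  have hpos : (0:ℝ) < (3:ℝ) ^ (k + 2) - 1 := by
    have : (3:ℝ)^(k+2) = 9 * x := by rw [pow_add]; ring
    rw [this]; nlinarith
  rw [ge_iff_le, le_div_iff₀ hpos]
  have h9 : (3:ℝ)^(k+2) = 9 * x := by rw [pow_add]; ring
  rw [h9]
  have hk' : (1:ℝ) ≤ (k:ℝ) := by exact_mod_cast hk
  nlinarith [mul_nonneg (by linarith : (0:ℝ) ≤ (k:ℝ)) (by linarith : (0:ℝ) ≤ x - 3)]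
end

section
/- The function f(k) = ((2k+8)·3^k - 1)/(3^(k+2) - 1), viewed as a real-valued function of the natural number k, is unbounded; i.e., for every real C there exists k with f(k) > C. -/
theorem greedy_ratio_unbounded :
    ∀ C : ℝ, ∃ k : ℕ,
      (((2 * k + 8) * 3 ^ k - 1 : ℝ)) / ((3 : ℝ) ^ (k + 2) - 1) > C := by
  intro C
  obtain ⟨k, hk⟩ := exists_nat_gt ((9 * C - 7) / 2)
  use k
  have h3k : (1 : ℝ) ≤ 3 ^ k := one_le_pow₀ (by norm_num)
  have hd0 : (0 : ℝ) < 3 ^ (k + 2) - 1 := by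
    have : (1 : ℝ) < 3 ^ (k + 2) := by
      calc (1:ℝ) < 3 ^ 2 := by norm_num
      _ ≤ 3 ^ (k+2) := pow_le_pow_right₀ (by norm_num) (by omega)
    linarith
  have hnum : ((2 * k + 7 : ℝ)) * 3 ^ k ≤ (2 * k + 8) * 3 ^ k - 1 := by
    nlinarith
  have hkey : ((2 * k + 7 : ℝ)) / 9 ≤
      ((2 * k + 8) * 3 ^ k - 1 : ℝ) / ((3 : ℝ) ^ (k + 2) - 1) := by
    rw [div_le_div_iff₀ (by norm_num) hd0]
    have hpow : (3:ℝ) ^ (k+2) = 9 * 3 ^ k := by ring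
    nlinarith [mul_le_mul_of_nonneg_left h3k (by positivity : (0:ℝ) ≤ (2 * k + 7 : ℝ))]
  have : C < ((2 * k + 7 : ℝ)) / 9 := by
    rw [lt_div_iff₀ (by norm_num : (0:ℝ) < 9)]
    have : (9 * C - 7) / 2 < (k : ℝ) := hk
    linarith
  linarith
end

section
/- For every natural number k ≥ 1, ((2k+8)·3^k - 1 + 3^(k+2)) / (2·3^(k+2) - 1) ≥ (2k+17)/18, as real numbers. -/
theorem clarke_wright_ratio_bound (k : ℕ) (hk : 1 ≤ k) :
    (((2 * k + 8) * 3 ^ k - 1 + 3 ^ (k + 2) : ℝ)) / (2 * (3 : ℝ) ^ (k + 2) - 1)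
      ≥ (2 * k + 17) / 18 := by
  have h1 : (1:ℝ) ≤ (3:ℝ) ^ k := one_le_pow₀ (by norm_num)
  have hk' : (1:ℝ) ≤ (k:ℝ) := by exact_mod_cast hk
  have h2 : (3:ℝ) ^ (k + 2) = 9 * 3 ^ k := by ring
  rw [ge_iff_le, div_le_div_iff₀ (by norm_num) (by rw [h2]; nlinarith)]
  rw [h2]
  nlinarith [mul_le_mul_of_nonneg_left h1 (by positivity : (0:ℝ) ≤ 2*k)]
end
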